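/- Let G be a directed graph with nonnegative vertex weights, D its distance matrix (D[v,u] = minimum total vertex weight of a path from v to u, ∞ if none), and B ⊆ V a set that intersects, for every pair (v,u) whose every shortest path has at least t edges, the vertex set of some shortest v–u path. Then for every pair (v,u): D[v,u] = min( δ_{t-1}(v,u), min over b ∈ B of D[v,b] + D[b,u] − w(b) ). -/

import Mathlib

open scoped ENNReal NNReal

/-- `l` is a directed path (walk) from `v` to `u` in the graph with edge relation `E`:
consecutive elements are joined by edges, the first element is `v` and the last is `u`. -/
def IsWalk {V : Type*} (E : V → V → Prop) (l : List V) (v u : V) : Prop :=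
  l.Chain' E ∧ l.head? = some v ∧ l.getLast? = some u

/-- The total weight of the vertices on a path, with vertex weights `w`. -/
noncomputable def pathWeight {V : Type*} (w : V → ℝ≥0) (l : List V) : ℝ≥0∞ :=
  (l.map fun x => (w x : ℝ≥0∞)).sum

/-- `deltaN E w i v u` is the minimum total vertex weight of a directed path from `v` to `u`
using at most `i` edges (i.e. at most `i + 1` vertices); it is `∞` if no such path exists. -/
noncomputable def deltaN {V : Type*} (E : V → V → Prop) (w : V → ℝ≥0) (i : ℕ) (v u : V) :
    ℝ≥0∞ :=
  sInf {c | ∃ l : List V, IsWalk E l v u ∧ l.length ≤ i + 1 ∧ c = pathWeight w l}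

/-- `deltaInf E w v u` is the distance from `v` to `u`: the minimum total vertex weight
over all directed paths from `v` to `u` (`∞` if none exists). -/
noncomputable def deltaInf {V : Type*} (E : V → V → Prop) (w : V → ℝ≥0) (v u : V) : ℝ≥0∞ :=
  sInf {c | ∃ l : List V, IsWalk E l v u ∧ c = pathWeight w l}

/-- `l` is a minimum-weight path from `v` to `u`. -/
def IsMinPath {V : Type*} (E : V → V → Prop) (w : V → ℝ≥0) (l : List V) (v u : V) : Prop :=
  IsWalk E l v u ∧ pathWeight w l = deltaInf E w v u

lemma pathWeight_append {V : Type*} (w : V → ℝ≥0) (l1 l2 : List V) :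
    pathWeight w (l1 ++ l2) = pathWeight w l1 + pathWeight w l2 := by
  simp [pathWeight]

lemma walk_append {V : Type*} {E : V → V → Prop} {l1 l2 : List V} {v b u : V}
    (h1 : IsWalk E l1 v b) (h2 : IsWalk E l2 b u) : IsWalk E (l1 ++ l2.tail) v u := by
  obtain ⟨c1, hh1, hg1⟩ := h1
  obtain ⟨c2, hh2, hg2⟩ := h2
  obtain ⟨tl2, rfl⟩ : ∃ tl, l2 = b :: tl := by
    cases l2 with
    | nil => simp at hh2
    | cons a l =>
      simp only [List.head?_cons, Option.some.injEq] at hh2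
      exact ⟨l, by rw [hh2]⟩
  refine ⟨?_, ?_, ?_⟩
  · unfold List.Chain'
    rw [List.isChain_append]
    refine ⟨c1, c2.tail, ?_⟩
    intro x hx y hy
    rw [hg1] at hx
    simp only [Option.mem_def, Option.some.injEq] at hx
    subst hx
    cases tl2 with
    | nil => simp at hy
    | cons a l =>
      simp only [List.tail_cons, List.head?_cons, Option.mem_def, Option.some.injEq] at hy
      subst hy
      exact (List.isChain_cons_cons.mp c2).1
  · cases l1 with
    | nil => simp at hh1
    | cons a l => simpa using hh1
  · cases tl2 with
    | nil =>
      simp only [List.tail_cons, List.append_nil]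
      rw [hg1]
      simpa using hg2
    | cons a l =>
      simp only [List.tail_cons]
      rw [List.getLast?_append]
      rw [show (a :: l).getLast? = ((b :: a :: l)).getLast? from List.getLast?_cons_cons.symm, hg2]
      rfl

lemma triangle {V : Type*} (E : V → V → Prop) (w : V → ℝ≥0) (v b u : V) :
    deltaInf E w v u ≤ deltaInf E w v b + deltaInf E w b u - (w b : ℝ≥0∞) := by
  have key : deltaInf E w v u + (w b : ℝ≥0∞) ≤ deltaInf E w v b + deltaInf E w b u := by
    by_cases h1 : deltaInf E w v b = ⊤
    · simp [h1]
    by_cases h2 : deltaInf E w b u = ⊤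
    · simp [h2]
    refine ENNReal.le_of_forall_pos_le_add fun ε hε hlt => ?_
    have hε2 : ((ε : ℝ≥0∞) / 2) ≠ 0 := by
      simp [ENNReal.div_eq_zero_iff, hε.ne']
    have hx : ∃ x ∈ {c | ∃ l : List V, IsWalk E l v b ∧ c = pathWeight w l},
        x < deltaInf E w v b + (ε : ℝ≥0∞) / 2 := by
      rw [← sInf_lt_iff]
      exact ENNReal.lt_add_right h1 hε2
    have hy : ∃ y ∈ {c | ∃ l : List V, IsWalk E l b u ∧ c = pathWeight w l},
        y < deltaInf E w b u + (ε : ℝ≥0∞) / 2 := by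
      rw [← sInf_lt_iff]
      exact ENNReal.lt_add_right h2 hε2
    obtain ⟨x, ⟨l1, hl1, rfl⟩, hxlt⟩ := hx
    obtain ⟨y, ⟨l2, hl2, rfl⟩, hylt⟩ := hy
    have hw : IsWalk E (l1 ++ l2.tail) v u := walk_append hl1 hl2
    have hl2b : ∃ tl, l2 = b :: tl := by
      cases l2 with
      | nil => simp [IsWalk] at hl2
      | cons a l =>
        obtain ⟨_, hh, _⟩ := hl2
        simp only [List.head?_cons, Option.some.injEq] at hh
        exact ⟨l, by rw [hh]⟩
    obtain ⟨tl, rfl⟩ := hl2b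
    have hpw : pathWeight w (l1 ++ (b :: tl).tail) + (w b : ℝ≥0∞)
        = pathWeight w l1 + pathWeight w (b :: tl) := by
      simp only [List.tail_cons, pathWeight_append]
      simp only [pathWeight, List.map_cons, List.sum_cons]
      ring
    have hle : deltaInf E w v u ≤ pathWeight w (l1 ++ (b :: tl).tail) :=
      sInf_le ⟨_, hw, rfl⟩
    calc deltaInf E w v u + (w b : ℝ≥0∞)
        ≤ pathWeight w (l1 ++ (b :: tl).tail) + (w b : ℝ≥0∞) := by gcongr
      _ = pathWeight w l1 + pathWeight w (b :: tl) := hpw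
      _ ≤ (deltaInf E w v b + (ε : ℝ≥0∞) / 2) + (deltaInf E w b u + (ε : ℝ≥0∞) / 2) :=
          add_le_add hxlt.le hylt.le
      _ = deltaInf E w v b + deltaInf E w b u + ((ε : ℝ≥0∞) / 2 + (ε : ℝ≥0∞) / 2) := by ring
      _ = deltaInf E w v b + deltaInf E w b u + (ε : ℝ≥0∞) := by rw [ENNReal.add_halves]
  calc deltaInf E w v u = deltaInf E w v u + (w b : ℝ≥0∞) - (w b : ℝ≥0∞) :=
        (ENNReal.add_sub_cancel_right ENNReal.coe_ne_top).symm
    _ ≤ deltaInf E w v b + deltaInf E w b u - (w b : ℝ≥0∞) := tsub_le_tsub_right key _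

/-- The combination step in the proof of Lemma 2: if `B` is a bridging set hitting, for every
pair `(v,u)` all of whose shortest paths have at least `t` edges, some shortest `v`–`u` path,
then `D[v,u] = min(δ_{t-1}(v,u), min over b ∈ B of D[v,b] + D[b,u] − w(b))`. -/
theorem bridging_set_combination {V : Type*} (E : V → V → Prop) (w : V → ℝ≥0)
    (t : ℕ) (ht : 1 ≤ t) (B : Set V)
    (hB : ∀ v u : V, deltaInf E w v u ≠ ⊤ →
      (∀ l : List V, IsMinPath E w l v u → t + 1 ≤ l.length) →
      ∃ l : List V, IsMinPath E w l v u ∧ ∃ b ∈ B, b ∈ l) :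
    ∀ v u : V, deltaInf E w v u =
      min (deltaN E w (t - 1) v u)
        (⨅ b : B, deltaInf E w v (b : V) + deltaInf E w (b : V) u - (w (b : V) : ℝ≥0∞)) := by
  intro v u
  apply le_antisymm
  · refine le_min ?_ ?_
    · exact sInf_le_sInf fun c ⟨l, h1, _, h3⟩ => ⟨l, h1, h3⟩
    · exact le_iInf fun b => triangle E w v b u
  · by_cases hD : deltaInf E w v u = ⊤
    · rw [hD]; exact le_top
    by_cases hmin : ∀ l : List V, IsMinPath E w l v u → t + 1 ≤ l.length
    · obtain ⟨l, ⟨hw, hpw⟩, b, hbB, hbl⟩ := hB v u hD hmin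
      refine le_trans (min_le_right _ _) ?_
      refine le_trans (iInf_le _ (⟨b, hbB⟩ : B)) ?_
      obtain ⟨s, t', rfl⟩ := List.append_of_mem hbl
      obtain ⟨hc, hh, hg⟩ := hw
      unfold List.Chain' at hc
      rw [List.isChain_split] at hc
      have hwalk1 : IsWalk E (s ++ [b]) v b := by
        refine ⟨hc.1, ?_, (List.getLast?_concat (l := s))⟩
        cases s with
        | nil => simpa using hh
        | cons a l => simpa using hh
      have hwalk2 : IsWalk E (b :: t') b u := by
        refine ⟨hc.2, rfl, ?_⟩
        rw [List.getLast?_append_of_ne_nil _ (List.cons_ne_nil b t')] at hg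
        exact hg
      have h1 : deltaInf E w v b ≤ pathWeight w (s ++ [b]) := sInf_le ⟨_, hwalk1, rfl⟩
      have h2 : deltaInf E w b u ≤ pathWeight w (b :: t') := sInf_le ⟨_, hwalk2, rfl⟩
      have hsum : pathWeight w (s ++ [b]) + pathWeight w (b :: t')
          = pathWeight w (s ++ b :: t') + (w b : ℝ≥0∞) := by
        simp only [pathWeight_append]
        simp only [pathWeight, List.map_cons, List.sum_cons, List.map_nil, List.sum_nil]
        ring
      calc deltaInf E w v b + deltaInf E w b u - (w b : ℝ≥0∞)
          ≤ pathWeight w (s ++ [b]) + pathWeight w (b :: t') - (w b : ℝ≥0∞) := by gcongr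
        _ = pathWeight w (s ++ b :: t') + (w b : ℝ≥0∞) - (w b : ℝ≥0∞) := by rw [hsum]
        _ = pathWeight w (s ++ b :: t') := ENNReal.add_sub_cancel_right ENNReal.coe_ne_top
        _ = deltaInf E w v u := hpw
    · push_neg at hmin
      obtain ⟨l, ⟨hw, hpw⟩, hlen⟩ := hmin
      refine le_trans (min_le_left _ _) ?_
      have hle : deltaN E w (t - 1) v u ≤ pathWeight w l := by
        apply sInf_le
        exact ⟨l, hw, by omega, rfl⟩
      rw [← hpw]
      exact hle
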